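/- Under the core contextual dataset model, suppose for some ε > 0 the prompt q_1 satisfies P( ‖Xᵀφ(X·q_1) − (q★ + y·w★)‖ ≤ ε ) ≥ 1 − δ for a fresh sample (X, y), and the head w_2 satisfies w_2ᵀw★/‖w_2‖ > 4ε. Given a fresh dataset (X_i, y_i)_{i=1}^n, set the bias b = (1/n)Σ_i f_θ(X_i) with θ = (w_2, q_1) and the debiased classifier f'_θ(X) = f_θ(X) − b. If n ≥ 8·log(2/(δn)), then with probability at least 1 − 2δn over the fresh dataset, the test error of the debiased classifier satisfies err(f'_θ) ≤ δ. -/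

import Mathlib

open MeasureTheory ProbabilityTheory Finset Filter

noncomputable section

/-- `d`-dimensional Euclidean space. -/
abbrev E (d : ℕ) : Type := EuclideanSpace ℝ (Fin d)

/-- Real inner product. -/
def ip {d : ℕ} (x y : E d) : ℝ := inner ℝ x y

/-- Softmax over `Fin T`. -/
def softmax {T : ℕ} (v : Fin T → ℝ) : Fin T → ℝ :=
  fun t => Real.exp (v t) / ∑ s, Real.exp (v s)

/-- Prompt-attention model `f^att_{(w,q)}(X) = wᵀ Xᵀ φ(X q)`. -/
def promptAtt {T d : ℕ} (w q : E d) (X : Fin T → E d) : ℝ :=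
  ∑ t, softmax (fun s => ip (X s) q) t * ip (X t) w

/-- Tokens of the contextual data model: `x_t = q★ + y•w★` on the relevance set `R`,
and `x_t = -δq•q★ - δw·y•w★ + z_t` off it. -/
def tokens {T d : ℕ} (R : Finset (Fin T)) (qs ws : E d) (y δq δw : ℝ)
    (z : Fin T → E d) : Fin T → E d :=
  fun t => if t ∈ R then qs + y • ws else -(δq • qs) - (δw * y) • ws + z t

/-- Projection of `x` orthogonally to `a`:  `(I - āāᵀ) x`. -/
def projPerp {d : ℕ} (a x : E d) : E d := x - (ip a x / ‖a‖ ^ 2) • a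

/-- Attention feature map `Xᵀ φ(X q) = Σ_t φ(Xq)_t x_t`. -/
def attnFeature {T d : ℕ} (q : E d) (X : Fin T → E d) : E d :=
  ∑ t, softmax (fun s => ip (X s) q) t • X t

/-- Empirical square loss of the prompt-attention model on `n` samples. -/
def Lhat {T d n : ℕ} (yv : Fin n → ℝ) (X : Fin n → Fin T → E d) (w q : E d) : ℝ :=
  (1 / (2 * (n : ℝ))) * ∑ i, (yv i - promptAtt w q (X i)) ^ 2
lemma promptAtt_eq_ip {T d : ℕ} (w q : E d) (X : Fin T → E d) :
    promptAtt w q X = ip (attnFeature q X) w := by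
  simp only [promptAtt, attnFeature, ip]
  rw [sum_inner]
  congr 1; ext t
  rw [real_inner_smul_left]

lemma continuous_attnFeature {T d : ℕ} (q : E d) :
    Continuous fun X : Fin T → E d => attnFeature q X := by
  unfold attnFeature softmax
  refine continuous_finset_sum _ fun t _ => Continuous.fun_smul ?_ (continuous_apply t)
  refine Continuous.div ?_ ?_ ?_
  · exact (Real.continuous_exp.comp ((continuous_apply t).inner (𝕜 := ℝ) continuous_const))
  · exact continuous_finset_sum _ fun s _ =>
      (Real.continuous_exp.comp ((continuous_apply s).inner (𝕜 := ℝ) continuous_const))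
  · intro X
    have : (0:ℝ) < ∑ s, Real.exp (ip (X s) q) :=
      Finset.sum_pos (fun s _ => Real.exp_pos _) ⟨t, Finset.mem_univ t⟩
    exact this.ne'

lemma continuous_promptAtt {T d : ℕ} (w q : E d) :
    Continuous fun X : Fin T → E d => promptAtt w q X := by
  simp only [promptAtt_eq_ip]
  exact (continuous_attnFeature q).inner (𝕜 := ℝ) continuous_const
lemma measurable_tokens {T d : ℕ} (R : Finset (Fin T)) (qs ws : E d)
    {Ω : Type} [MeasurableSpace Ω] (y : Ω → ℝ) (z : Fin T → Ω → E d)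
    (hy : Measurable y) (hz : ∀ t, Measurable (z t)) :
    Measurable fun ω => tokens R qs ws (y ω) 0 0 (fun t => z t ω) := by
  apply measurable_pi_lambda
  intro t
  unfold tokens
  by_cases h : t ∈ R <;> simp only [h, if_true, if_false]
  · exact measurable_const.add (hy.smul_const ws)
  · have h1 : Measurable fun ω => (0 * y ω) • ws := (hy.const_mul 0).smul_const ws
    have h2 : Measurable fun ω => -((0:ℝ) • qs) - (0 * y ω) • ws :=
      Measurable.sub measurable_const h1
    exact h2.add (hz t)

lemma continuous_testfun {T d : ℕ} (R : Finset (Fin T)) (qs ws w q : E d) (b : ℝ) :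
    Continuous fun s : ℝ × (Fin T → E d) =>
      s.1 * (promptAtt w q (tokens R qs ws s.1 0 0 s.2) - b) := by
  have htok : Continuous fun s : ℝ × (Fin T → E d) => tokens R qs ws s.1 0 0 s.2 := by
    apply continuous_pi
    intro t
    unfold tokens
    by_cases h : t ∈ R <;> simp only [h, if_true, if_false]
    · exact Continuous.add continuous_const (Continuous.smul continuous_fst continuous_const)
    · exact Continuous.add (Continuous.sub continuous_const (Continuous.smul
        (Continuous.mul continuous_const continuous_fst) continuous_const))
        ((continuous_apply t).comp continuous_snd)
  exact continuous_fst.mul (((continuous_promptAtt w q).comp htok).sub continuous_const)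

lemma rademacher_mgf {Ω : Type} [MeasurableSpace Ω] (μ : Measure Ω) [IsProbabilityMeasure μ]
    (y : Ω → ℝ) (hy : Measurable y) (h1 : μ {ω | y ω = 1} = 1 / 2)
    (hm : μ {ω | y ω = -1} = 1 / 2) (t : ℝ) :
    ∫ ω, Real.exp (t * y ω) ∂μ = Real.cosh t := by
  set A : Set Ω := {ω | y ω = 1}
  set B : Set Ω := {ω | y ω = -1}
  have hA : MeasurableSet A := hy (measurableSet_singleton 1)
  have hB : MeasurableSet B := hy (measurableSet_singleton (-1))
  have hAB : μ (A ∪ B) = 1 := by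
    rw [measure_union _ hB, h1, hm]
    · exact ENNReal.add_halves 1
    · rw [Set.disjoint_left]
      intro ω hωA hωB
      have h1' : y ω = 1 := hωA
      have h2' : y ω = -1 := hωB
      rw [h1'] at h2'; norm_num at h2'
  have hcompl : μ (A ∪ B)ᶜ = 0 := by
    rw [measure_compl (hA.union hB) (measure_ne_top _ _), hAB, measure_univ]
    simp
  have hae : ∀ᵐ ω ∂μ, ω ∈ A ∪ B := by
    rw [MeasureTheory.ae_iff]
    exact hcompl
  have heq : (fun ω => Real.exp (t * y ω)) =ᵐ[μ]
      fun ω => A.indicator (fun _ => Real.exp t) ω + B.indicator (fun _ => Real.exp (-t)) ω := by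
    filter_upwards [hae] with ω hω
    rcases hω with hω | hω
    · have hy1 : y ω = 1 := hω
      have hnB : ω ∉ B := by
        simp only [B, Set.mem_setOf_eq, hy1]; norm_num
      simp [Set.indicator_of_mem hω, Set.indicator_of_notMem hnB, hy1]
    · have hy1 : y ω = -1 := hω
      have hnA : ω ∉ A := by
        simp only [A, Set.mem_setOf_eq, hy1]; norm_num
      simp [Set.indicator_of_mem hω, Set.indicator_of_notMem hnA, hy1, mul_comm]
  rw [integral_congr_ae heq, integral_add
      ((integrable_const _).indicator hA) ((integrable_const _).indicator hB),
    integral_indicator_const _ hA, integral_indicator_const _ hB, measureReal_def,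
    measureReal_def, h1, hm]
  have h12 : ((1:ENNReal)/2).toReal = 1/2 := by simp
  rw [h12, Real.cosh_eq]
  simp [smul_eq_mul]
  ring
lemma chernoff_rademacher {Ω : Type} [MeasurableSpace Ω] (μ : Measure Ω)
    [IsProbabilityMeasure μ] {ι : Type} (Y : ι → Ω → ℝ)
    (hmeas : ∀ i, Measurable (Y i))
    (hindep : iIndepFun Y μ)
    (hmgf : ∀ i t, mgf (Y i) μ t = Real.cosh t)
    (hbound : ∀ i, ∀ᵐ ω ∂μ, |Y i ω| ≤ 1) (s : Finset ι) :
    μ {ω | (s.card : ℝ) / 2 ≤ |∑ i ∈ s, Y i ω|} ≤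
      ENNReal.ofReal (2 * Real.exp (-(s.card : ℝ) / 8)) := by
  set m : ℝ := (s.card : ℝ) with hm
  have hm0 : 0 ≤ m := Nat.cast_nonneg _
  have hSbound : ∀ᵐ ω ∂μ, |∑ i ∈ s, Y i ω| ≤ m := by
    have h := (Filter.eventually_all_finset s).2 (fun i _ => hbound i)
    filter_upwards [h] with ω hω
    calc |∑ i ∈ s, Y i ω| ≤ ∑ i ∈ s, |Y i ω| := Finset.abs_sum_le_sum_abs _ _
      _ ≤ ∑ i ∈ s, 1 := Finset.sum_le_sum hω
      _ = m := by simp [hm]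
  have hsum_meas : Measurable (∑ i ∈ s, Y i) := by
    have h := Finset.measurable_sum s (fun i (_ : i ∈ s) => hmeas i)
    convert h using 1
    ext ω; simp [Finset.sum_apply]
  have hint : ∀ t : ℝ, Integrable (fun ω => Real.exp (t * (∑ i ∈ s, Y i) ω)) μ := by
    intro t
    refine Integrable.mono' (integrable_const (Real.exp (|t| * m)))
      ((hsum_meas.const_mul t).exp.aestronglyMeasurable) ?_
    filter_upwards [hSbound] with ω hω
    rw [Real.norm_eq_abs, Real.abs_exp]
    apply Real.exp_le_exp.2
    calc t * (∑ i ∈ s, Y i) ω ≤ |t * (∑ i ∈ s, Y i) ω| := le_abs_self _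
      _ = |t| * |∑ i ∈ s, Y i ω| := by rw [abs_mul, Finset.sum_apply]
      _ ≤ |t| * m := by
          apply mul_le_mul_of_nonneg_left _ (abs_nonneg t)
          simpa [Finset.sum_apply] using hω
  have hmgfS : ∀ t : ℝ, mgf (∑ i ∈ s, Y i) μ t = Real.cosh t ^ s.card := by
    intro t
    rw [hindep.mgf_sum hmeas s]
    simp [hmgf]
  have hcosh : Real.cosh (1/2 : ℝ) ≤ Real.exp (1/8) := by
    have h := Real.cosh_le_exp_half_sq (1/2 : ℝ)
    norm_num at h
    exact h
  have hprodbound : Real.cosh (1/2 : ℝ) ^ s.card ≤ Real.exp (m / 8) := by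
    calc Real.cosh (1/2 : ℝ) ^ s.card ≤ Real.exp (1/8) ^ s.card :=
          pow_le_pow_left₀ (le_of_lt (Real.cosh_pos (x := 1/2))) hcosh _
      _ = Real.exp (m / 8) := by
          rw [← Real.exp_nat_mul]; congr 1; rw [hm]; ring
  have hup : (μ {ω | m / 2 ≤ (∑ i ∈ s, Y i) ω}).toReal ≤ Real.exp (-m/8) := by
    calc (μ {ω | m / 2 ≤ (∑ i ∈ s, Y i) ω}).toReal
        ≤ Real.exp (-(1/2) * (m/2)) * mgf (∑ i ∈ s, Y i) μ (1/2) :=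
          measure_ge_le_exp_mul_mgf (m/2) (by norm_num) (hint (1/2))
      _ ≤ Real.exp (-(m/4)) * Real.exp (m/8) := by
          rw [hmgfS]
          apply mul_le_mul _ hprodbound (by positivity) (Real.exp_pos _).le
          apply le_of_eq; congr 1; ring
      _ = Real.exp (-m/8) := by rw [← Real.exp_add]; congr 1; ring
  have hdown : (μ {ω | (∑ i ∈ s, Y i) ω ≤ -(m/2)}).toReal ≤ Real.exp (-m/8) := by
    calc (μ {ω | (∑ i ∈ s, Y i) ω ≤ -(m/2)}).toReal
        ≤ Real.exp (-(-(1/2)) * (-(m/2))) * mgf (∑ i ∈ s, Y i) μ (-(1/2)) :=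
          measure_le_le_exp_mul_mgf (-(m/2)) (by norm_num) (hint (-(1/2)))
      _ ≤ Real.exp (-(m/4)) * Real.exp (m/8) := by
          rw [hmgfS, Real.cosh_neg]
          apply mul_le_mul _ hprodbound (by positivity) (Real.exp_pos _).le
          apply le_of_eq; congr 1; ring
      _ = Real.exp (-m/8) := by rw [← Real.exp_add]; congr 1; ring
  have hsub : {ω | m / 2 ≤ |∑ i ∈ s, Y i ω|} ⊆
      {ω | m / 2 ≤ (∑ i ∈ s, Y i) ω} ∪ {ω | (∑ i ∈ s, Y i) ω ≤ -(m/2)} := by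
    intro ω hω
    simp only [Set.mem_setOf_eq, Finset.sum_apply] at hω ⊢
    rcases abs_le.mp (le_refl |∑ i ∈ s, Y i ω|) with _
    rcases le_abs.mp hω with h | h
    · left; simpa [Finset.sum_apply] using h
    · right; simp only [Set.mem_union, Set.mem_setOf_eq, Finset.sum_apply]
      linarith
  calc μ {ω | m / 2 ≤ |∑ i ∈ s, Y i ω|}
      ≤ μ ({ω | m / 2 ≤ (∑ i ∈ s, Y i) ω} ∪ {ω | (∑ i ∈ s, Y i) ω ≤ -(m/2)}) :=
        measure_mono hsub
    _ ≤ μ {ω | m / 2 ≤ (∑ i ∈ s, Y i) ω} + μ {ω | (∑ i ∈ s, Y i) ω ≤ -(m/2)} :=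
        measure_union_le _ _
    _ ≤ ENNReal.ofReal (Real.exp (-m/8)) + ENNReal.ofReal (Real.exp (-m/8)) := by
        apply add_le_add
        · rw [← ENNReal.ofReal_toReal (measure_ne_top μ _)]
          exact ENNReal.ofReal_le_ofReal hup
        · rw [← ENNReal.ofReal_toReal (measure_ne_top μ _)]
          exact ENNReal.ofReal_le_ofReal hdown
    _ = ENNReal.ofReal (2 * Real.exp (-m/8)) := by
        rw [← ENNReal.ofReal_add (Real.exp_pos _).le (Real.exp_pos _).le]
        congr 1; ring
lemma key_arith {n : ℕ} (hn : 0 < n) (ε W c a : ℝ) (hε : 0 < ε) (hW : 0 < W)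
    (hc : 4 * ε * W < c) (Yv Fv : Fin n → ℝ)
    (hFv : ∀ i, |Fv i - (a + Yv i * c)| ≤ ε * W)
    (hsum : |∑ i, Yv i| ≤ (n : ℝ) / 2)
    (y' F' : ℝ) (hy' : y' = 1 ∨ y' = -1)
    (hF' : |F' - (a + y' * c)| ≤ ε * W) :
    0 < y' * (F' - (1 / (n : ℝ)) * ∑ i, Fv i) := by
  have hn' : (0:ℝ) < n := Nat.cast_pos.2 hn
  set S : ℝ := ∑ i, Yv i with hS
  set B : ℝ := ∑ i, Fv i with hB
  have hBbound : |B - ((n : ℝ) * a + S * c)| ≤ (n : ℝ) * (ε * W) := by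
    have h1 : (n : ℝ) * a + S * c = ∑ i, (a + Yv i * c) := by
      rw [Finset.sum_add_distrib, Finset.sum_const, Finset.card_univ, Fintype.card_fin,
        ← Finset.sum_mul]
      simp [nsmul_eq_mul, hS]
    rw [h1, hB, ← Finset.sum_sub_distrib]
    calc |∑ i, (Fv i - (a + Yv i * c))| ≤ ∑ i, |Fv i - (a + Yv i * c)| :=
          Finset.abs_sum_le_sum_abs _ _
      _ ≤ ∑ _i : Fin n, ε * W := Finset.sum_le_sum fun i _ => hFv i
      _ = (n : ℝ) * (ε * W) := by
          rw [Finset.sum_const, Finset.card_univ, Fintype.card_fin, nsmul_eq_mul]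
  have hbb : |(1 / (n:ℝ)) * B - (a + (S / n) * c)| ≤ ε * W := by
    have h2 : (1 / (n:ℝ)) * B - (a + (S / n) * c) =
        (1 / (n:ℝ)) * (B - ((n : ℝ) * a + S * c)) := by
      field_simp
    rw [h2, abs_mul, abs_of_pos (by positivity : (0:ℝ) < 1 / (n:ℝ))]
    calc (1 / (n:ℝ)) * |B - ((n : ℝ) * a + S * c)| ≤ (1 / (n:ℝ)) * ((n:ℝ) * (ε * W)) :=
          mul_le_mul_of_nonneg_left hBbound (by positivity)
      _ = ε * W := by field_simp
  have hS1 : S ≤ (n:ℝ)/2 := (abs_le.mp hsum).2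
  have hS2 : -((n:ℝ)/2) ≤ S := (abs_le.mp hsum).1
  have hSn1 : S / n ≤ 1/2 := by rw [div_le_iff₀ hn']; linarith
  have hSn2 : -(1/2) ≤ S / n := by rw [le_div_iff₀ hn']; linarith
  have hc0 : 0 < c := lt_trans (by positivity) hc
  have hb1 := (abs_le.mp hbb).1
  have hb2 := (abs_le.mp hbb).2
  have hmul1 : (S / n) * c ≤ (1/2) * c := mul_le_mul_of_nonneg_right hSn1 hc0.le
  have hmul2 : -(1/2) * c ≤ (S / n) * c := mul_le_mul_of_nonneg_right hSn2 hc0.le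
  rcases hy' with h | h <;> subst h
  · have hF1 := (abs_le.mp hF').1
    nlinarith
  · have hF2 := (abs_le.mp hF').2
    nlinarith

lemma rademacher_pm_null {Ω : Type} [MeasurableSpace Ω] (μ : Measure Ω)
    [IsProbabilityMeasure μ] (y : Ω → ℝ) (hy : Measurable y)
    (h1 : μ {ω | y ω = 1} = 1 / 2) (hm : μ {ω | y ω = -1} = 1 / 2) :
    μ {ω | ¬(y ω = 1 ∨ y ω = -1)} = 0 := by
  have hA : MeasurableSet {ω | y ω = 1} := hy (measurableSet_singleton 1)
  have hB : MeasurableSet {ω | y ω = -1} := hy (measurableSet_singleton (-1))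
  have hAB : μ ({ω | y ω = 1} ∪ {ω | y ω = -1}) = 1 := by
    rw [measure_union _ hB, h1, hm]
    · exact ENNReal.add_halves 1
    · rw [Set.disjoint_left]
      intro ω hωA hωB
      have h1' : y ω = 1 := hωA
      have h2' : y ω = -1 := hωB
      rw [h1'] at h2'; norm_num at h2'
  have : {ω | ¬(y ω = 1 ∨ y ω = -1)} = ({ω | y ω = 1} ∪ {ω | y ω = -1})ᶜ := by
    ext ω; simp [Set.mem_union, Set.mem_setOf_eq]
  rw [this, measure_compl (hA.union hB) (measure_ne_top _ _), hAB, measure_univ]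
  simp
lemma ip_bound {T d : ℕ} (q₁ w₂ qs ws : E d) (X : Fin T → E d) (y ε : ℝ)
    (h : ‖attnFeature q₁ X - (qs + y • ws)‖ ≤ ε) :
    |promptAtt w₂ q₁ X - (ip qs w₂ + y * ip ws w₂)| ≤ ε * ‖w₂‖ := by
  rw [promptAtt_eq_ip]
  have heq : ip (attnFeature q₁ X) w₂ - (ip qs w₂ + y * ip ws w₂) =
      ip (attnFeature q₁ X - (qs + y • ws)) w₂ := by
    simp [ip, inner_sub_left, inner_add_left, real_inner_smul_left, Finset.mul_sum, mul_assoc]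
  rw [heq]
  calc |ip (attnFeature q₁ X - (qs + y • ws)) w₂|
      ≤ ‖attnFeature q₁ X - (qs + y • ws)‖ * ‖w₂‖ := abs_real_inner_le_norm _ _
    _ ≤ ε * ‖w₂‖ := mul_le_mul_of_nonneg_right h (norm_nonneg _)

/-- A family, indexed by `ι`, of i.i.d. samples from the core contextual dataset model
with label `y = ±1` uniform, relevance sets of size `ζT`, and i.i.d. centered
`σ`-subGaussian noise tokens with symmetric law and zero third moment. -/
structure CoreSamples (T d : ℕ) (ζ σ : ℝ) (qs ws : E d)
    {Ω : Type} [MeasurableSpace Ω] (μ : Measure Ω) (ι : Type) where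
  /-- labels -/
  yv : ι → Ω → ℝ
  /-- noise tokens -/
  z : ι → Fin T → Ω → E d
  /-- relevance sets -/
  Rset : ι → Finset (Fin T)
  hRcard : ∀ i, ((Rset i).card : ℝ) = ζ * T
  hy_meas : ∀ i, Measurable (yv i)
  hz_meas : ∀ i t, Measurable (z i t)
  hy_one : ∀ i, μ {ω | yv i ω = 1} = 1 / 2
  hy_mone : ∀ i, μ {ω | yv i ω = -1} = 1 / 2
  indep : iIndepFun
    (fun i ω => (yv i ω, fun t => z i t ω)) μ
  hyz : ∀ i, IndepFun (yv i) (fun ω t => z i t ω) μ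
  hz_indep : ∀ i, iIndepFun (fun t ω => z i t ω) μ
  hz_mean : ∀ i t, ∫ ω, z i t ω ∂μ = 0
  hz_subg : ∀ i t (v : E d) (s : ℝ),
    ∫ ω, Real.exp (s * ip (z i t ω) v) ∂μ ≤ Real.exp (σ ^ 2 * s ^ 2 * ‖v‖ ^ 2 / 2)
  hz_symm : ∀ i t, Measure.map (fun ω => z i t ω) μ = Measure.map (fun ω => -(z i t ω)) μ
  hz_third : ∀ i t (a b c : E d),
    ∫ ω, ip (z i t ω) a * ip (z i t ω) b * ip (z i t ω) c ∂μ = 0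
  hsample_id : ∀ i j, Measure.map (fun ω => (yv i ω, fun t => z i t ω)) μ
      = Measure.map (fun ω => (yv j ω, fun t => z j t ω)) μ
  hz_id : ∀ i t j s, Measure.map (z i t) μ = Measure.map (z j s) μ

/-- The token matrix of the `i`-th sample (core model: `δ = (0,0)`). -/
def sampleX {T d : ℕ} {ζ σ : ℝ} {qs ws : E d} {Ω : Type} [MeasurableSpace Ω]
    {μ : Measure Ω} {ι : Type} (M : CoreSamples T d ζ σ qs ws μ ι) (i : ι) (ω : Ω) :
    Fin T → E d :=
  tokens (M.Rset i) qs ws (M.yv i ω) 0 0 fun t => M.z i t ω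

/-- Negative empirical head-gradient `Ĝ_w(q, w) = -∇_w L̂(w, q)`. -/
def GwHat {T d n : ℕ} {ζ σ : ℝ} {qs ws : E d} {Ω : Type} [MeasurableSpace Ω]
    {μ : Measure Ω} (M : CoreSamples T d ζ σ qs ws μ (Fin n)) (q w : E d) (ω : Ω) :
    E d :=
  -gradient (fun w' => Lhat (fun i => M.yv i ω) (fun i => sampleX M i ω) w' q) w

/-- Negative empirical prompt-gradient `Ĝ_q(q, w) = -∇_q L̂(w, q)`. -/
def GqHat {T d n : ℕ} {ζ σ : ℝ} {qs ws : E d} {Ω : Type} [MeasurableSpace Ω]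
    {μ : Measure Ω} (M : CoreSamples T d ζ σ qs ws μ (Fin n)) (q w : E d) (ω : Ω) :
    E d :=
  -gradient (fun q' => Lhat (fun i => M.yv i ω) (fun i => sampleX M i ω) w q') q

/-- Lemma: debiasing predictions.  If the prompt `q₁` yields attention
features `ε`-close to the signal token with probability `1 - δ`, and the head `w₂`
satisfies `w₂ᵀw★/‖w₂‖ > 4ε`, then subtracting the empirical bias
`b = (1/n)Σᵢ f_θ(Xᵢ)` computed on a fresh dataset yields, with probability `1 - 2δn`
over that dataset, a classifier with test error at most `δ`. -/
theorem debiasing_predictions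
    {T d n : ℕ} (hT : 0 < T) (hn : 0 < n)
    (ζ σ : ℝ) (hζ0 : 0 < ζ) (hζ1 : ζ < 1) (hσ : 0 < σ)
    (qs ws : E d)
    {Ω : Type} [MeasurableSpace Ω] (μ : Measure Ω) [IsProbabilityMeasure μ]
    -- `n` fresh samples indexed by `some i`, plus an independent test sample `none`
    (M : CoreSamples T d ζ σ qs ws μ (Option (Fin n)))
    (ε δ : ℝ) (hε : 0 < ε) (hδ : 0 < δ)
    (q₁ w₂ : E d)
    (hfeat : ∀ i, ENNReal.ofReal (1 - δ) ≤
      μ {ω | ‖attnFeature q₁ (sampleX M i ω) - (qs + M.yv i ω • ws)‖ ≤ ε})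
    (hcorr : 4 * ε < ip ws w₂ / ‖w₂‖)
    (hbign : 8 * Real.log (2 / (δ * n)) ≤ n) :
    ENNReal.ofReal (1 - 2 * δ * n) ≤
      μ {ω |
        -- the debiased classifier `f'_θ = f_θ - b` has test error at most `δ`
        (μ.map fun ω' => (M.yv none ω', fun t => M.z none t ω'))
            {s : ℝ × (Fin T → E d) |
              s.1 * (promptAtt w₂ q₁ (tokens (M.Rset none) qs ws s.1 0 0 s.2)
                - (1 / (n : ℝ)) * ∑ i : Fin n, promptAtt w₂ q₁ (sampleX M (some i) ω))
                < 0}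
          ≤ ENNReal.ofReal δ} := by
  classical
  by_cases htriv : 1 - 2 * δ * n ≤ 0
  · rw [ENNReal.ofReal_eq_zero.2 htriv]; exact zero_le
  push_neg at htriv
  have hn' : (0:ℝ) < n := Nat.cast_pos.2 hn
  have hn1 : (1:ℝ) ≤ n := Nat.one_le_cast.2 hn
  have hδn1 : 2 * δ * n < 1 := by linarith
  have hδ1 : δ < 1 := by nlinarith
  -- the head direction
  have hW : 0 < ‖w₂‖ := by
    rcases eq_or_lt_of_le (norm_nonneg w₂) with h0 | h0
    · exfalso
      rw [← h0, div_zero] at hcorr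
      linarith
    · exact h0
  have hc : 4 * ε * ‖w₂‖ < ip ws w₂ := (lt_div_iff₀ hW).1 hcorr
  -- measurability
  have hXmeas : ∀ i, Measurable fun ω => sampleX M i ω := fun i =>
    measurable_tokens (M.Rset i) qs ws (M.yv i) (M.z i) (M.hy_meas i) (M.hz_meas i)
  have hfeatmeas : ∀ i, Measurable fun ω => attnFeature q₁ (sampleX M i ω) := fun i =>
    (continuous_attnFeature q₁).measurable.comp (hXmeas i)
  have hclosemeas : ∀ i, MeasurableSet
      {ω | ‖attnFeature q₁ (sampleX M i ω) - (qs + M.yv i ω • ws)‖ ≤ ε} := by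
    intro i
    have hm : Measurable fun ω => ‖attnFeature q₁ (sampleX M i ω) - (qs + M.yv i ω • ws)‖ :=
      ((hfeatmeas i).sub (measurable_const.add ((M.hy_meas i).smul_const ws))).norm
    exact measurableSet_le hm measurable_const
  -- probability of a far feature
  have hfar : ∀ i, μ {ω | ‖attnFeature q₁ (sampleX M i ω) - (qs + M.yv i ω • ws)‖ ≤ ε}ᶜ
      ≤ ENNReal.ofReal δ := by
    intro i
    rw [measure_compl (hclosemeas i) (measure_ne_top _ _), measure_univ]
    have h2 : ENNReal.ofReal δ = 1 - ENNReal.ofReal (1 - δ) := by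
      rw [← ENNReal.ofReal_one, ← ENNReal.ofReal_sub _ (by linarith : (0:ℝ) ≤ 1 - δ)]
      norm_num
    rw [h2]
    exact tsub_le_tsub_left (hfeat i) 1
  -- labels are ±1 a.s.
  have hynull : ∀ i, μ {ω | ¬(M.yv i ω = 1 ∨ M.yv i ω = -1)} = 0 := fun i =>
    rademacher_pm_null μ (M.yv i) (M.hy_meas i) (M.hy_one i) (M.hy_mone i)
  -- Hoeffding for the label average
  have hYindep : iIndepFun M.yv μ := by
    have h := M.indep.comp (fun _ => Prod.fst) (fun _ => measurable_fst)
    exact h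
  have hYmgf : ∀ i t, mgf (M.yv i) μ t = Real.cosh t := by
    intro i t
    unfold mgf
    exact rademacher_mgf μ (M.yv i) (M.hy_meas i) (M.hy_one i) (M.hy_mone i) t
  have hYbd : ∀ i : Option (Fin n), ∀ᵐ ω ∂μ, |M.yv i ω| ≤ 1 := by
    intro i
    rw [ae_iff]
    refine measure_mono_null ?_ (hynull i)
    intro ω hω
    simp only [Set.mem_setOf_eq, not_le] at hω
    simp only [Set.mem_setOf_eq]
    intro h
    rcases h with h | h <;> rw [h] at hω <;> norm_num at hω
  have hcher := chernoff_rademacher μ M.yv M.hy_meas hYindep hYmgf hYbd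
    (Finset.univ.map (Function.Embedding.some : Fin n ↪ Option (Fin n)))
  simp only [Finset.card_map, Finset.card_univ, Fintype.card_fin, Finset.sum_map,
    Function.Embedding.some_apply] at hcher
  have hexp : 2 * Real.exp (-(n:ℝ)/8) ≤ δ * n := by
    have hpos : (0:ℝ) < δ * n := by positivity
    have h1 : 2 / (δ * n) ≤ Real.exp ((n:ℝ)/8) := by
      rw [← Real.exp_log (by positivity : (0:ℝ) < 2 / (δ * n))]
      exact Real.exp_le_exp.2 (by linarith)
    have h2 : 2 ≤ δ * n * Real.exp ((n:ℝ)/8) := by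
      rw [div_le_iff₀ hpos] at h1; linarith
    have h3 : Real.exp (-(n:ℝ)/8) * Real.exp ((n:ℝ)/8) = 1 := by
      rw [← Real.exp_add]
      have h4 : -(n:ℝ)/8 + (n:ℝ)/8 = 0 := by ring
      rw [h4, Real.exp_zero]
    nlinarith [Real.exp_pos ((n:ℝ)/8), Real.exp_pos (-(n:ℝ)/8)]
  have hSbad : μ {ω | (n:ℝ)/2 ≤ |∑ i : Fin n, M.yv (some i) ω|} ≤ ENNReal.ofReal (δ * n) :=
    hcher.trans (ENNReal.ofReal_le_ofReal hexp)
  -- the good event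
  set G : Set Ω :=
    ((⋂ i : Fin n, {ω | ‖attnFeature q₁ (sampleX M (some i) ω)
        - (qs + M.yv (some i) ω • ws)‖ ≤ ε})
      ∩ {ω | (n:ℝ)/2 ≤ |∑ i : Fin n, M.yv (some i) ω|}ᶜ)
      ∩ ⋂ i : Fin n, {ω | M.yv (some i) ω = 1 ∨ M.yv (some i) ω = -1} with hGdef
  have hGc : μ Gᶜ ≤ ENNReal.ofReal (2 * δ * n) := by
    have hsub : Gᶜ ⊆
        ((⋃ i : Fin n, {ω | ‖attnFeature q₁ (sampleX M (some i) ω)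
            - (qs + M.yv (some i) ω • ws)‖ ≤ ε}ᶜ)
          ∪ {ω | (n:ℝ)/2 ≤ |∑ i : Fin n, M.yv (some i) ω|})
          ∪ ⋃ i : Fin n, {ω | M.yv (some i) ω = 1 ∨ M.yv (some i) ω = -1}ᶜ := by
      rw [hGdef]
      simp only [Set.compl_inter, compl_compl, Set.compl_iInter]
      exact subset_rfl
    have h1 : μ (⋃ i : Fin n, {ω | ‖attnFeature q₁ (sampleX M (some i) ω)
        - (qs + M.yv (some i) ω • ws)‖ ≤ ε}ᶜ) ≤ ENNReal.ofReal (δ * n) := by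
      refine (measure_iUnion_le _).trans ?_
      rw [tsum_fintype]
      calc ∑ i : Fin n, μ {ω | ‖attnFeature q₁ (sampleX M (some i) ω)
              - (qs + M.yv (some i) ω • ws)‖ ≤ ε}ᶜ
          ≤ ∑ _i : Fin n, ENNReal.ofReal δ :=
            Finset.sum_le_sum fun i _ => hfar (some i)
        _ = ENNReal.ofReal (δ * n) := by
            rw [Finset.sum_const, Finset.card_univ, Fintype.card_fin, nsmul_eq_mul,
              ← ENNReal.ofReal_natCast n, ← ENNReal.ofReal_mul (Nat.cast_nonneg n)]
            congr 1
            ring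
    have h3 : μ (⋃ i : Fin n, {ω | M.yv (some i) ω = 1 ∨ M.yv (some i) ω = -1}ᶜ) = 0 := by
      refine measure_iUnion_null fun i => ?_
      have : {ω | M.yv (some i) ω = 1 ∨ M.yv (some i) ω = -1}ᶜ
          = {ω | ¬(M.yv (some i) ω = 1 ∨ M.yv (some i) ω = -1)} := rfl
      rw [this]
      exact hynull (some i)
    calc μ Gᶜ
        ≤ μ (((⋃ i : Fin n, {ω | ‖attnFeature q₁ (sampleX M (some i) ω)
            - (qs + M.yv (some i) ω • ws)‖ ≤ ε}ᶜ)
          ∪ {ω | (n:ℝ)/2 ≤ |∑ i : Fin n, M.yv (some i) ω|})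
          ∪ ⋃ i : Fin n, {ω | M.yv (some i) ω = 1 ∨ M.yv (some i) ω = -1}ᶜ) :=
          measure_mono hsub
      _ ≤ (μ ((⋃ i : Fin n, {ω | ‖attnFeature q₁ (sampleX M (some i) ω)
            - (qs + M.yv (some i) ω • ws)‖ ≤ ε}ᶜ)
          ∪ {ω | (n:ℝ)/2 ≤ |∑ i : Fin n, M.yv (some i) ω|}))
          + μ (⋃ i : Fin n, {ω | M.yv (some i) ω = 1 ∨ M.yv (some i) ω = -1}ᶜ) :=
          measure_union_le _ _
      _ ≤ (μ (⋃ i : Fin n, {ω | ‖attnFeature q₁ (sampleX M (some i) ω)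
            - (qs + M.yv (some i) ω • ws)‖ ≤ ε}ᶜ)
          + μ {ω | (n:ℝ)/2 ≤ |∑ i : Fin n, M.yv (some i) ω|}) + 0 := by
          rw [h3]
          exact add_le_add (measure_union_le _ _) le_rfl
      _ ≤ (ENNReal.ofReal (δ * n) + ENNReal.ofReal (δ * n)) + 0 :=
          add_le_add (add_le_add h1 hSbad) le_rfl
      _ = ENNReal.ofReal (2 * δ * n) := by
          rw [add_zero, ← ENNReal.ofReal_add (by positivity) (by positivity)]
          congr 1
          ring
  have hGmem : ENNReal.ofReal (1 - 2 * δ * n) ≤ μ G := by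
    have h1 : (1 : ENNReal) ≤ μ G + μ Gᶜ := by
      rw [← measure_univ (μ := μ), ← Set.union_compl_self G]
      exact measure_union_le _ _
    calc ENNReal.ofReal (1 - 2 * δ * n) = 1 - ENNReal.ofReal (2 * δ * n) := by
          rw [← ENNReal.ofReal_one, ← ENNReal.ofReal_sub _ (by positivity)]
      _ ≤ 1 - μ Gᶜ := tsub_le_tsub_left hGc 1
      _ ≤ μ G := by
          rw [tsub_le_iff_right]
          exact h1
  refine le_trans hGmem (measure_mono ?_)
  intro ω hω
  obtain ⟨⟨hclose, hSg⟩, hYok⟩ := hω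
  simp only [Set.mem_iInter, Set.mem_setOf_eq] at hclose hYok
  simp only [Set.mem_compl_iff, Set.mem_setOf_eq, not_le] at hSg
  simp only [Set.mem_setOf_eq]
  set b : ℝ := (1 / (n : ℝ)) * ∑ i : Fin n, promptAtt w₂ q₁ (sampleX M (some i) ω) with hbdef
  have hfm : Measurable fun ω' => (M.yv none ω', fun t => M.z none t ω') :=
    (M.hy_meas none).prodMk (measurable_pi_lambda _ (fun t => M.hz_meas none t))
  have hSmeas : MeasurableSet {s : ℝ × (Fin T → E d) |
      s.1 * (promptAtt w₂ q₁ (tokens (M.Rset none) qs ws s.1 0 0 s.2) - b) < 0} :=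
    measurableSet_lt (continuous_testfun (M.Rset none) qs ws w₂ q₁ b).measurable
      measurable_const
  rw [Measure.map_apply hfm hSmeas]
  have hsub2 : (fun ω' => (M.yv none ω', fun t => M.z none t ω')) ⁻¹'
      {s : ℝ × (Fin T → E d) |
        s.1 * (promptAtt w₂ q₁ (tokens (M.Rset none) qs ws s.1 0 0 s.2) - b) < 0} ⊆
      {ω' | ‖attnFeature q₁ (sampleX M none ω') - (qs + M.yv none ω' • ws)‖ ≤ ε}ᶜ
      ∪ {ω' | ¬(M.yv none ω' = 1 ∨ M.yv none ω' = -1)} := by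
    intro ω' hω'
    simp only [Set.mem_preimage, Set.mem_setOf_eq] at hω'
    rw [Set.mem_union]
    by_contra hcon
    push_neg at hcon
    obtain ⟨hcl, hpm⟩ := hcon
    simp only [Set.mem_compl_iff, Set.mem_setOf_eq, not_not] at hcl hpm
    have hpm2 : M.yv none ω' = 1 ∨ M.yv none ω' = -1 := by
      rcases eq_or_ne (M.yv none ω') 1 with h | h
      · exact Or.inl h
      rcases eq_or_ne (M.yv none ω') (-1) with h2 | h2
      · exact Or.inr h2
      · exact absurd ⟨h, h2⟩ hpm
    have hkey := key_arith hn ε ‖w₂‖ (ip ws w₂) (ip qs w₂) hε hW hc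
      (fun i => M.yv (some i) ω) (fun i => promptAtt w₂ q₁ (sampleX M (some i) ω))
      (fun i => ip_bound q₁ w₂ qs ws (sampleX M (some i) ω) (M.yv (some i) ω) ε (hclose i))
      hSg.le (M.yv none ω') (promptAtt w₂ q₁ (sampleX M none ω')) hpm2
      (ip_bound q₁ w₂ qs ws (sampleX M none ω') (M.yv none ω') ε hcl)
    rw [← hbdef] at hkey
    exact absurd hω' (not_lt.2 hkey.le)
  calc μ _ ≤ μ ({ω' | ‖attnFeature q₁ (sampleX M none ω') - (qs + M.yv none ω' • ws)‖ ≤ ε}ᶜ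
        ∪ {ω' | ¬(M.yv none ω' = 1 ∨ M.yv none ω' = -1)}) := measure_mono hsub2
    _ ≤ μ {ω' | ‖attnFeature q₁ (sampleX M none ω') - (qs + M.yv none ω' • ws)‖ ≤ ε}ᶜ
        + μ {ω' | ¬(M.yv none ω' = 1 ∨ M.yv none ω' = -1)} := measure_union_le _ _
    _ ≤ ENNReal.ofReal δ + 0 := add_le_add (hfar none) (le_of_eq (hynull none))
    _ = ENNReal.ofReal δ := add_zero _
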